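/- Let G be a group and k ≥ 1. (1) If k = 2 and |G| ≥ 2, or if k ≥ 3 and |G| ≥ k + 1, then the Cayley graph Cay(G^k, F(G,k)) is path-connected. (2) If G is a finite abelian group with |G| = k ≥ 3, then the Cayley graph Cay(G^k, F(G,k)) is not path-connected. -/

import Mathlib

/-- The Cayley graph of `G^k` with respect to `F(G,k)`: vertices `G^k`, with `x,y`
adjacent when `x⁻¹y ∈ F(G,k)` (the set `F(G,k)` is symmetric and misses the identity for
`k ≥ 2`, so `SimpleGraph.fromRel` yields exactly this graph). -/
def cayleyConf (G : Type*) [Group G] (k : ℕ) : SimpleGraph (Fin k → G) :=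
  SimpleGraph.fromRel fun x y => x⁻¹ * y ∈ {g : Fin k → G | Function.Injective g}

section Aux

variable {G : Type*} [Group G] {k : ℕ}

private lemma cayley_adj (hk : 2 ≤ k) {x y : Fin k → G}
    (h : Function.Injective (x⁻¹ * y)) : (cayleyConf G k).Adj x y := by
  refine ⟨fun hxy => ?_, Or.inl h⟩
  subst hxy
  have h2 : (x⁻¹ * x) ⟨0, by omega⟩ = (x⁻¹ * x) ⟨1, by omega⟩ := by
    simp
  have := h h2
  simp [Fin.ext_iff] at this

/-- Left multiplication as a graph homomorphism of the Cayley graph. -/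
private def cayleyLeftMul (a : Fin k → G) : cayleyConf G k →g cayleyConf G k where
  toFun x := a * x
  map_rel' := by
    intro x y hxy
    obtain ⟨hne, hr⟩ := hxy
    have key : (a * x)⁻¹ * (a * y) = x⁻¹ * y := by group
    have key2 : (a * y)⁻¹ * (a * x) = y⁻¹ * x := by group
    refine ⟨fun h => hne (mul_left_cancel h), ?_⟩
    simpa only [Set.mem_setOf_eq, key, key2] using hr

private lemma reach_mul (a : Fin k → G) {x y : Fin k → G}
    (h : (cayleyConf G k).Reachable x y) :
    (cayleyConf G k).Reachable (a * x) (a * y) :=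
  h.map (cayleyLeftMul a)

/-- Every element of a subgroup containing all `Pi.mulSingle`s. -/
private lemma mem_of_single (H : Subgroup (Fin k → G))
    (hs : ∀ (i : Fin k) (a : G), Pi.mulSingle i a ∈ H) (d : Fin k → G) : d ∈ H := by
  classical
  suffices h : ∀ (n : ℕ) (d : Fin k → G),
      (Finset.univ.filter fun i => d i ≠ 1).card ≤ n → d ∈ H by
    exact h _ d le_rfl
  intro n
  induction n with
  | zero =>
    intro d hd
    have hone : d = 1 := by
      ext i
      show d i = 1
      by_contra hne
      have hi : i ∈ Finset.univ.filter fun i => d i ≠ 1 := by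
        simp [hne]
      have := Finset.card_pos.2 ⟨i, hi⟩
      omega
    rw [hone]; exact one_mem _
  | succ n ih =>
    intro d hd
    by_cases hone : d = 1
    · rw [hone]; exact one_mem _
    · obtain ⟨i, hi⟩ : ∃ i, d i ≠ 1 := by
        by_contra hA
        push_neg at hA
        exact hone (funext fun i => hA i)
      have hmem : i ∈ Finset.univ.filter fun j => d j ≠ 1 := by simp [hi]
      have hdec : d = Pi.mulSingle i (d i) * Function.update d i 1 := by
        ext j
        rcases eq_or_ne j i with rfl | hj
        · simp
        · simp [Pi.mulSingle_eq_of_ne hj, Function.update_of_ne hj]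
      rw [hdec]
      refine H.mul_mem (hs i (d i)) (ih _ ?_)
      have hsub : (Finset.univ.filter fun j => Function.update d i 1 j ≠ 1) ⊆
          (Finset.univ.filter fun j => d j ≠ 1).erase i := by
        intro j hj
        simp only [Finset.mem_filter, Finset.mem_univ, true_and] at hj
        have hji : j ≠ i := by
          intro h; rw [h] at hj; simp at hj
        rw [Function.update_of_ne hji] at hj
        simp [Finset.mem_erase, hji, hj]
      have := Finset.card_le_card hsub
      have := Finset.card_erase_of_mem hmem
      omega

/-- Case `k = 2`: each `Pi.mulSingle` lies in the closure of injective tuples. -/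
private lemma single_mem_two (i : Fin 2) (a : G) :
    Pi.mulSingle i a ∈ Subgroup.closure {g : Fin 2 → G | Function.Injective g} := by
  rcases eq_or_ne a 1 with rfl | ha
  · simpa using one_mem _
  · apply Subgroup.subset_closure
    intro j1 j2 hj
    rcases eq_or_ne i j1 with rfl | h1 <;> rcases eq_or_ne i j2 with rfl | h2
    · rfl
    · rw [Pi.mulSingle_eq_same, Pi.mulSingle_eq_of_ne (Ne.symm h2)] at hj
      exact absurd hj ha
    · rw [Pi.mulSingle_eq_same, Pi.mulSingle_eq_of_ne (Ne.symm h1)] at hj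
      exact absurd hj.symm ha
    · apply Fin.ext
      have v1 : j1.val ≠ i.val := fun h => h1 (Fin.ext h.symm)
      have v2 : j2.val ≠ i.val := fun h => h2 (Fin.ext h.symm)
      have := j1.isLt; have := j2.isLt; have := i.isLt
      omega

/-- Case `k ≥ 3` with `|G| ≥ k+1`: each `Pi.mulSingle` lies in the closure of
injective tuples. -/
private lemma single_mem_big {m : ℕ}
    (hbig : ((m + 2 : ℕ) : Cardinal) ≤ Cardinal.mk G) (i : Fin (m + 1)) (a : G) :
    Pi.mulSingle i a ∈ Subgroup.closure {g : Fin (m + 1) → G | Function.Injective g} := by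
  classical
  rcases eq_or_ne a 1 with rfl | ha
  · simpa using one_mem _
  obtain ⟨e⟩ : Nonempty (Fin (m + 2) ↪ G) :=
    Cardinal.lift_mk_le'.mp (by simpa using hbig)
  set T : Finset G := (Finset.univ.image e) \ {1, a} with hT
  have hTcard : m ≤ T.card := by
    have h1 : (Finset.univ.image e).card = m + 2 := by
      rw [Finset.card_image_of_injective _ e.injective, Finset.card_univ, Fintype.card_fin]
    have h2 : ({1, a} : Finset G).card ≤ 2 := by
      apply (Finset.card_insert_le _ _).trans
      simp
    have h3 := Finset.le_card_sdiff ({1, a} : Finset G) (Finset.univ.image e)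
    rw [← hT] at h3
    omega
  obtain ⟨T', hT'sub, hT'card⟩ := Finset.exists_subset_card_eq hTcard
  let w : Fin m → G := fun j => (T'.equivFin.symm (Fin.cast hT'card.symm j) : G)
  have hw_inj : Function.Injective w := by
    intro j1 j2 h
    have h2 := T'.equivFin.symm.injective (Subtype.ext h)
    have h3 := congrArg Fin.val h2
    simp only [Fin.coe_cast] at h3
    exact Fin.ext h3
  have hw_mem : ∀ j, w j ∈ T := fun j => hT'sub (T'.equivFin.symm _).2
  have hw1 : ∀ j, w j ≠ 1 := by
    intro j
    have := hw_mem j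
    rw [hT, Finset.mem_sdiff] at this
    simp only [Finset.mem_insert, Finset.mem_singleton, not_or] at this
    exact this.2.1
  have hwa : ∀ j, w j ≠ a := by
    intro j
    have := hw_mem j
    rw [hT, Finset.mem_sdiff] at this
    simp only [Finset.mem_insert, Finset.mem_singleton, not_or] at this
    exact this.2.2
  set u : Fin (m + 1) → G := i.insertNth 1 w with hu
  have hu_i : u i = 1 := by rw [hu]; exact Fin.insertNth_apply_same (α := fun _ => G) i 1 w
  have hu_s : ∀ j, u (i.succAbove j) = w j := by
    intro j; rw [hu]; exact Fin.insertNth_apply_succAbove (α := fun _ => G) i 1 w j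
  have hu_inj : Function.Injective u := by
    intro j1 j2 h
    rcases eq_or_ne i j1 with rfl | h1 <;> rcases eq_or_ne i j2 with rfl | h2
    · rfl
    · obtain ⟨l, rfl⟩ := Fin.exists_succAbove_eq (Ne.symm h2)
      rw [hu_i, hu_s] at h
      exact absurd h.symm (hw1 l)
    · obtain ⟨l, rfl⟩ := Fin.exists_succAbove_eq (Ne.symm h1)
      rw [hu_i, hu_s] at h
      exact absurd h (hw1 l)
    · obtain ⟨l1, rfl⟩ := Fin.exists_succAbove_eq (Ne.symm h1)
      obtain ⟨l2, rfl⟩ := Fin.exists_succAbove_eq (Ne.symm h2)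
      rw [hu_s, hu_s] at h
      exact congrArg _ (hw_inj h)
  set s : Fin (m + 1) → G := Pi.mulSingle i a * u with hsdef
  have hs_i : s i = a := by
    simp [hsdef, Pi.mul_apply, hu_i]
  have hs_s : ∀ j, s (i.succAbove j) = w j := by
    intro j
    simp [hsdef, Pi.mul_apply, hu_s j, Pi.mulSingle_eq_of_ne (Fin.succAbove_ne i j)]
  have hs_inj : Function.Injective s := by
    intro j1 j2 h
    rcases eq_or_ne i j1 with rfl | h1 <;> rcases eq_or_ne i j2 with rfl | h2
    · rfl
    · obtain ⟨l, rfl⟩ := Fin.exists_succAbove_eq (Ne.symm h2)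
      rw [hs_i, hs_s] at h
      exact absurd h.symm (hwa l)
    · obtain ⟨l, rfl⟩ := Fin.exists_succAbove_eq (Ne.symm h1)
      rw [hs_i, hs_s] at h
      exact absurd h (hwa l)
    · obtain ⟨l1, rfl⟩ := Fin.exists_succAbove_eq (Ne.symm h1)
      obtain ⟨l2, rfl⟩ := Fin.exists_succAbove_eq (Ne.symm h2)
      rw [hs_s, hs_s] at h
      exact congrArg _ (hw_inj h)
  have key : Pi.mulSingle i a = s * u⁻¹ := by
    rw [hsdef, mul_inv_cancel_right]
  rw [key]
  exact Subgroup.mul_mem _ (Subgroup.subset_closure hs_inj)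
    (Subgroup.inv_mem _ (Subgroup.subset_closure hu_inj))

end Aux

/-- (1) if `k = 2` and `|G| ≥ 2`, or `k ≥ 3` and `|G| ≥ k + 1`, then
`Cay(G^k, F(G,k))` is path-connected; (2) if `G` is finite abelian with `|G| = k ≥ 3`, then
`Cay(G^k, F(G,k))` is not path-connected. -/
theorem cayley_graph_configuration_connected_iff (G : Type*) [Group G] (k : ℕ) :
    (((k = 2 ∧ ((2 : ℕ) : Cardinal) ≤ Cardinal.mk G) ∨
        (3 ≤ k ∧ ((k + 1 : ℕ) : Cardinal) ≤ Cardinal.mk G)) →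
      (cayleyConf G k).Connected) ∧
    ((Finite G ∧ (∀ a b : G, a * b = b * a) ∧ Nat.card G = k ∧ 3 ≤ k) →
      ¬ (cayleyConf G k).Connected) := by
  constructor
  · -- Part (1): connectedness
    intro h
    have hk2 : 2 ≤ k := by rcases h with ⟨rfl, _⟩ | ⟨h3, _⟩ <;> omega
    have hsingle : ∀ (i : Fin k) (a : G), Pi.mulSingle i a ∈
        Subgroup.closure {g : Fin k → G | Function.Injective g} := by
      rcases h with ⟨rfl, _⟩ | ⟨h3, hbig⟩
      · exact single_mem_two
      · obtain ⟨m, rfl⟩ : ∃ m, k = m + 1 := ⟨k - 1, by omega⟩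
        have hm : m + 1 + 1 = m + 2 := by omega
        rw [hm] at hbig
        exact single_mem_big hbig
    have hall : ∀ d : Fin k → G, d ∈
        Subgroup.closure {g : Fin k → G | Function.Injective g} :=
      mem_of_single _ hsingle
    have hreach1 : ∀ z : Fin k → G, (cayleyConf G k).Reachable 1 z := by
      intro z
      refine Subgroup.closure_induction ?_ ?_ ?_ ?_ (hall z)
      · intro x hx
        exact (cayley_adj hk2 (by simpa using hx)).reachable
      · exact SimpleGraph.Reachable.refl 1
      · intro x y hx hy rx ry
        exact rx.trans (by simpa using reach_mul x ry)
      · intro x hx rx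
        have := reach_mul x⁻¹ rx
        simpa using this.symm
    constructor
    intro x y
    have := reach_mul x (hreach1 (x⁻¹ * y))
    simpa using this
  · -- Part (2): non-connectedness
    rintro ⟨hfin, hcomm, hcard, hk3⟩ hconn
    classical
    letI : Fintype G := Fintype.ofFinite G
    letI : CommGroup G := { ‹Group G› with mul_comm := hcomm }
    set c : G := ∏ g : G, g with hc
    have hcG : Fintype.card G = k := by rw [← Nat.card_eq_fintype_card, hcard]
    have hcc : c = c⁻¹ := by
      rw [hc, ← Finset.prod_inv_distrib]
      exact (_root_.Equiv.prod_comp (Equiv.inv G) id).symm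
    have step : ∀ x y : Fin k → G, (cayleyConf G k).Adj x y →
        (∏ j, x j)⁻¹ * ∏ j, y j = c := by
      intro x y hxy
      obtain ⟨hne, hr⟩ := hxy
      have main : ∀ p q : Fin k → G, Function.Injective (p⁻¹ * q) →
          (∏ j, p j)⁻¹ * ∏ j, q j = c := by
        intro p q hinj
        have hbij : Function.Bijective (p⁻¹ * q) :=
          (Fintype.bijective_iff_injective_and_card _).2 ⟨hinj, by simp [hcG]⟩
        have h1 : ∏ j, (p⁻¹ * q) j = c := hbij.prod_comp id
        rw [← h1]
        simp [Pi.mul_apply, Pi.inv_apply, Finset.prod_mul_distrib]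
      rcases hr with hr | hr
      · exact main x y hr
      · have h1 := main y x hr
        have h2 : (∏ j, x j)⁻¹ * ∏ j, y j = ((∏ j, y j)⁻¹ * ∏ j, x j)⁻¹ := by
          group
        rw [h2, h1, ← hcc]
    have walkinv : ∀ (x y : Fin k → G) (w : (cayleyConf G k).Walk x y),
        (∏ j, x j)⁻¹ * ∏ j, y j = 1 ∨ (∏ j, x j)⁻¹ * ∏ j, y j = c := by
      intro x y w
      induction w with
      | nil => left; simp
      | @cons x z y h p ih =>
        have h1 := step _ _ h
        have hsplit : (∏ j, x j)⁻¹ * ∏ j, y j =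
            ((∏ j, x j)⁻¹ * ∏ j, z j) * ((∏ j, z j)⁻¹ * ∏ j, y j) := by group
        rcases ih with h2 | h2
        · right; rw [hsplit, h1, h2, mul_one]
        · left; rw [hsplit, h1, h2]
          exact mul_eq_one_iff_eq_inv.2 hcc
    have hk1 : 3 ≤ Fintype.card G := by omega
    obtain ⟨d, hd⟩ : ∃ d : G, d ∉ ({1, c} : Finset G) := by
      by_contra hall
      push_neg at hall
      have hsub : (Finset.univ : Finset G) ⊆ {1, c} := fun g _ => hall g
      have h1 := Finset.card_le_card hsub
      have h2 : ({1, c} : Finset G).card ≤ 2 := by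
        apply (Finset.card_insert_le _ _).trans
        simp
      rw [Finset.card_univ] at h1
      omega
    have i0 : Fin k := ⟨0, by omega⟩
    set y : Fin k → G := Function.update (1 : Fin k → G) i0 d with hy
    have hyp : ∏ j, y j = d := by
      rw [hy, Finset.prod_update_of_mem (Finset.mem_univ i0)]
      simp
    obtain ⟨w⟩ := hconn.preconnected 1 y
    have hinv := walkinv _ _ w
    rw [hyp] at hinv
    simp only [Pi.one_apply, Finset.prod_const_one, inv_one, one_mul] at hinv
    simp only [Finset.mem_insert, Finset.mem_singleton, not_or] at hd
    rcases hinv with h | h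
    · exact hd.1 h
    · exact hd.2 h
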